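/- Let G be a compact topological group and let V be a finite-dimensional ℚ_p-vector space equipped with a continuous linear action of G (i.e., a homomorphism ρ from G to the group of linear automorphisms of V such that (g, v) ↦ ρ(g)(v) is continuous). Then there exists a G-stable ℤ_p-lattice in V: a finitely generated ℤ_p-submodule T of V which spans V over ℚ_p and satisfies ρ(g)(T) = T for every g ∈ G. -/

import Mathlib

/-- Let `G` be a compact topological group and `V` a finite-dimensional
`ℚ_p`-vector space (with its natural topology: Hausdorff topological vector space topology)
equipped with a continuous linear action `ρ` of `G`. Then there exists a `G`-stable
`ℤ_p`-lattice in `V`: a finitely generated `ℤ_p`-submodule `T` of `V` spanning `V` over `ℚ_p`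
with `ρ(g)(T) = T` for all `g ∈ G`. -/
theorem stmt10 (p : ℕ) [Fact p.Prime] (G : Type*) [Group G] [TopologicalSpace G]
    [IsTopologicalGroup G] [CompactSpace G]
    (V : Type*) [AddCommGroup V] [Module ℚ_[p] V] [FiniteDimensional ℚ_[p] V]
    [Module ℤ_[p] V] [IsScalarTower ℤ_[p] ℚ_[p] V]
    [TopologicalSpace V] [IsTopologicalAddGroup V] [ContinuousSMul ℚ_[p] V] [T2Space V]
    (ρ : G →* (V ≃ₗ[ℚ_[p]] V))
    (hρ : Continuous fun gv : G × V => ρ gv.1 gv.2) :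
    ∃ T : Submodule ℤ_[p] V, T.FG ∧ Submodule.span ℚ_[p] (T : Set V) = ⊤ ∧
      ∀ g : G, (fun v => ρ g v) '' (T : Set V) = (T : Set V) := by
  classical
  let b := Module.finBasis ℚ_[p] V
  let L0 : Submodule ℤ_[p] V := Submodule.span ℤ_[p] (Set.range b)
  let f : G → (V →ₗ[ℤ_[p]] V) := fun g => ((ρ g).toLinearMap.restrictScalars ℤ_[p])
  have hf_apply : ∀ (g : G) (v : V), f g v = ρ g v := fun _ _ => rfl
  let S : G → Submodule ℤ_[p] V := fun g => L0.map (f g)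
  have hmul : ∀ (g h : G) (v : V), ρ (g * h) v = ρ g (ρ h v) := by
    intro g h v; rw [map_mul]; exact rfl
  have hinv : ∀ (g : G) (v : V), ρ g⁻¹ (ρ g v) = v := by
    intro g v
    have h1 : ρ g⁻¹ (ρ g v) = ρ (g⁻¹ * g) v := (hmul g⁻¹ g v).symm
    rw [h1, inv_mul_cancel, map_one]; rfl
  have hinv' : ∀ (g : G) (v : V), ρ g (ρ g⁻¹ v) = v := by
    intro g v; have := hinv g⁻¹ v; rwa [inv_inv] at this
  -- composition law for lattices
  have hS_comp : ∀ g h : G, S (g * h) = (S h).map (f g) := by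
    intro g h
    show L0.map (f (g * h)) = (L0.map (f h)).map (f g)
    rw [← Submodule.map_comp]
    congr 1
    ext v
    exact hmul g h v
  -- membership in L0 via coordinates
  have hmem : ∀ v : V, v ∈ L0 ↔ ∀ j, ‖b.repr v j‖ ≤ 1 := by
    intro v
    constructor
    · intro hv j
      rw [show L0 = Submodule.span ℤ_[p] (Set.range ⇑b) from rfl,
        Submodule.mem_span_range_iff_exists_fun] at hv
      obtain ⟨c, rfl⟩ := hv
      have hc : ∀ i, c i • b i = ((c i : ℚ_[p])) • b i := by
        intro i
        rw [← IsScalarTower.algebraMap_smul ℚ_[p] (c i) (b i)]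
        rfl
      simp only [hc, map_sum, map_smul, Module.Basis.repr_self]
      rw [Finset.sum_apply']
      simp only [Finsupp.smul_single, smul_eq_mul, mul_one, Finsupp.single_apply]
      rw [Finset.sum_ite_eq' Finset.univ j]
      simp only [Finset.mem_univ, if_true]
      rw [PadicInt.padic_norm_e_of_padicInt]
      exact (c j).norm_le_one
    · intro h
      let c : Fin (Module.finrank ℚ_[p] V) → ℤ_[p] := fun j => ⟨b.repr v j, h j⟩
      have hciq : ∀ j, (c j : ℚ_[p]) = b.repr v j := fun j => rfl
      have : v = ∑ j, c j • b j := by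
        have hv := b.sum_repr v
        rw [← hv]
        refine Finset.sum_congr rfl fun j _ => ?_
        rw [← IsScalarTower.algebraMap_smul ℚ_[p] (c j) (b j)]
        rfl
      rw [show L0 = Submodule.span ℤ_[p] (Set.range ⇑b) from rfl,
        Submodule.mem_span_range_iff_exists_fun]
      exact ⟨c, this.symm⟩
  -- the unit ball of ℚ_p is open
  have hball : IsOpen {x : ℚ_[p] | ‖x‖ ≤ 1} := by
    rw [Metric.isOpen_iff]
    intro x hx
    refine ⟨1, one_pos, fun y hy => ?_⟩
    have h1 : ‖y - x‖ < 1 := by simpa [dist_eq_norm] using hy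
    have h2 : y = (y - x) + x := by ring
    calc ‖y‖ = ‖(y - x) + x‖ := by rw [← h2]
      _ ≤ max ‖y - x‖ ‖x‖ := Padic.nonarchimedean _ _
      _ ≤ 1 := max_le h1.le hx
  -- continuity of coordinates
  have hcoord : ∀ j, Continuous fun v : V => b.repr v j := by
    intro j
    have := LinearMap.continuous_of_finiteDimensional
      ((Finsupp.lapply j).comp (b.repr.toLinearMap : V →ₗ[ℚ_[p]] _))
    exact this
  have hL0open : IsOpen (L0 : Set V) := by
    have : (L0 : Set V) = ⋂ j, (fun v => b.repr v j) ⁻¹' {x : ℚ_[p] | ‖x‖ ≤ 1} := by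
      ext v
      simp only [Set.mem_iInter, Set.mem_preimage, Set.mem_setOf_eq, SetLike.mem_coe]
      exact hmem v
    rw [this]
    exact isOpen_iInter_of_finite fun j => (hball.preimage (hcoord j))
  -- membership in S g
  have hmemS : ∀ (g : G) (v : V), v ∈ S g ↔ ρ g⁻¹ v ∈ L0 := by
    intro g v
    constructor
    · rintro ⟨w, hw, rfl⟩
      rwa [hf_apply, hinv]
    · intro h
      exact ⟨ρ g⁻¹ v, h, by rw [hf_apply, hinv']⟩
  -- continuity of evaluation maps
  have hev : ∀ v : V, Continuous fun g : G => ρ g v := by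
    intro v
    exact hρ.comp (continuous_id.prodMk continuous_const)
  have hev' : ∀ v : V, Continuous fun g : G => ρ g⁻¹ v :=
    fun v => (hev v).comp continuous_inv
  -- S g is open as a set
  have hSopen : ∀ g, IsOpen (S g : Set V) := by
    intro g
    have : (S g : Set V) = (fun v => ρ g⁻¹ v) ⁻¹' (L0 : Set V) := by
      ext v; exact hmemS g v
    rw [this]
    exact hL0open.preimage (LinearMap.continuous_of_finiteDimensional (ρ g⁻¹).toLinearMap)
  -- S g as span of translated basis
  have hS_span : ∀ g, S g = Submodule.span ℤ_[p] (Set.range fun i => ρ g (b i)) := by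
    intro g
    show L0.map (f g) = _
    rw [show L0 = Submodule.span ℤ_[p] (Set.range ⇑b) from rfl, Submodule.map_span,
      ← Set.range_comp]
    rfl
  -- the relation S h = S g is open in h
  have hUopen : ∀ g, IsOpen {h : G | S h = S g} := by
    intro g
    have hchar : {h : G | S h = S g} =
        (⋂ i, (fun h : G => ρ h (b i)) ⁻¹' (S g : Set V)) ∩
        (⋂ i, (fun h : G => ρ h⁻¹ (ρ g (b i))) ⁻¹' (L0 : Set V)) := by
      ext h
      simp only [Set.mem_setOf_eq, Set.mem_inter_iff, Set.mem_iInter, Set.mem_preimage,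
        SetLike.mem_coe]
      constructor
      · intro hEq
        constructor
        · intro i
          rw [← hEq]
          refine ⟨b i, Submodule.subset_span ⟨i, rfl⟩, rfl⟩
        · intro i
          rw [← hmemS h]
          rw [hEq]
          exact ⟨b i, Submodule.subset_span ⟨i, rfl⟩, rfl⟩
      · rintro ⟨h1, h2⟩
        apply le_antisymm
        · rw [hS_span h, Submodule.span_le]
          rintro _ ⟨i, rfl⟩
          exact h1 i
        · rw [hS_span g, Submodule.span_le]
          rintro _ ⟨i, rfl⟩
          rw [SetLike.mem_coe, hmemS h]
          exact h2 i
    rw [hchar]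
    exact ((isOpen_iInter_of_finite fun i => (hSopen g).preimage (hev (b i))).inter
      (isOpen_iInter_of_finite fun i => hL0open.preimage (hev' (ρ g (b i)))))
  -- compactness: finitely many lattice classes cover G
  obtain ⟨t, ht⟩ := isCompact_univ.elim_finite_subcover (fun g : G => {h : G | S h = S g})
    hUopen (fun g _ => Set.mem_iUnion.2 ⟨g, rfl⟩)
  have hcover : ∀ g : G, ∃ k ∈ t, S g = S k := by
    intro g
    have := ht (Set.mem_univ g)
    simp only [Set.mem_iUnion] at this
    obtain ⟨k, hk, hgk⟩ := this
    exact ⟨k, hk, hgk⟩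
  refine ⟨t.sup S, ?_, ?_, ?_⟩
  · refine Submodule.fg_finset_sup t S fun g _ => ?_
    exact (Submodule.fg_span (Set.finite_range ⇑b)).map (f g)
  · -- spans V over ℚ_p
    have hS1 : S 1 = L0 := by
      show L0.map (f 1) = L0
      have : f 1 = LinearMap.id := by
        ext v; rw [hf_apply, map_one]; rfl
      rw [this, Submodule.map_id]
    obtain ⟨k, hk, hSk⟩ := hcover 1
    have hL0le : L0 ≤ t.sup S := by
      rw [← hS1, hSk]
      exact Finset.le_sup hk
    rw [eq_top_iff, ← b.span_eq]
    refine Submodule.span_le.2 ?_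
    intro v hv
    exact Submodule.subset_span (hL0le (Submodule.subset_span hv))
  · -- stability
    intro g
    have hstab : (t.sup S).map (f g) = t.sup S := by
      apply le_antisymm
      · rw [Submodule.map_le_iff_le_comap]
        refine Finset.sup_le fun h hh => ?_
        rw [← Submodule.map_le_iff_le_comap, ← hS_comp]
        obtain ⟨k, hk, hSk⟩ := hcover (g * h)
        rw [hSk]
        exact Finset.le_sup hk
      · refine Finset.sup_le fun k hk => ?_
        have : S k = (S (g⁻¹ * k)).map (f g) := by
          rw [← hS_comp, mul_inv_cancel_left]
        rw [this]
        apply Submodule.map_mono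
        obtain ⟨k', hk', hSk'⟩ := hcover (g⁻¹ * k)
        rw [hSk']
        exact Finset.le_sup hk'
    calc (fun v => ρ g v) '' ((t.sup S : Submodule ℤ_[p] V) : Set V)
        = ((t.sup S).map (f g) : Set V) := by rw [Submodule.map_coe]; rfl
      _ = ((t.sup S : Submodule ℤ_[p] V) : Set V) := by rw [hstab]
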